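/- Let n, m ∈ ℕ, D ∈ ℝ^{m×n} with D·𝟙_n = 0, Y_b = diag(b_1,…,b_m), E = diag(E_1,…,E_n) with E_i > 0, M = diag(M_1,…,M_n) with M_i ≥ 0, 𝔊 = {i : M_i > 0}, p* ∈ ℝ^n, ω∞ ∈ ℝ and λ∞ ∈ ℝ^m with 0 = −E(ω∞𝟙_n) − DᵀY_b sin λ∞ + p*. For each i let ω̄thr_i > 0 and ω̱thr_i < 0 be thresholds with ω̱thr_i < ω∞ < ω̄thr_i. Let λ, ω, u be as in the swing dynamics (λ differentiable with λ′ = Dω; M_i ω_i′ = (−Eω − DᵀY_b sin λ + p* + u)_i for i ∈ 𝔊; 0 = (−Eω − DᵀY_b sin λ + p* + u)_i for i ∉ 𝔊), and suppose additionally that for every t and every i: ω_i(t) u_i(t) ≤ 0 whenever ω_i(t) ∉ (ω̱thr_i, ω̄thr_i), and u_i(t) = 0 whenever ω_i(t) ∈ (ω̱thr_i, ω̄thr_i). Then the derivative of t ↦ V(λ(t), ω_𝔊(t)) is nonpositive at every t. -/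

import Mathlib

open Real Finset

/-- The energy function V(λ, ω_𝔊), where 𝔊 = {i | 0 < M i}. -/
noncomputable def Venergy {n m : ℕ} (M : Fin n → ℝ) (b : Fin m → ℝ)
    (ωinf : ℝ) (lamInf : Fin m → ℝ) (lam : Fin m → ℝ) (ω : Fin n → ℝ) : ℝ :=
  (1/2) * ∑ i ∈ Finset.univ.filter (fun i => 0 < M i), M i * (ω i - ωinf)^2
    + ∑ j, b j * (Real.cos (lamInf j) - Real.cos (lam j)
        - (lam j - lamInf j) * Real.sin (lamInf j))

/-- Termwise sign lemma: each node contributes a nonpositive amount. -/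
lemma key_term (E ωi ωinf ui ωu ωl : ℝ) (hE : 0 < E) (hu : 0 < ωu) (hl : ωl < 0)
    (h1 : ωl < ωinf) (h2 : ωinf < ωu)
    (hs1 : ¬ (ωl < ωi ∧ ωi < ωu) → ωi * ui ≤ 0)
    (hs2 : (ωl < ωi ∧ ωi < ωu) → ui = 0) :
    (ωi - ωinf) * (-(E * (ωi - ωinf)) + ui) ≤ 0 := by
  by_cases h : ωl < ωi ∧ ωi < ωu
  · rw [hs2 h]; nlinarith [sq_nonneg (ωi - ωinf)]
  · have hs := hs1 h
    push_neg at h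
    rcases lt_or_ge ωl ωi with h' | h'
    · have hge : ωu ≤ ωi := h h'
      have hωpos : 0 < ωi := lt_of_lt_of_le hu hge
      have hui : ui ≤ 0 := nonpos_of_mul_nonpos_right (by linarith) hωpos
      nlinarith [sq_nonneg (ωi - ωinf)]
    · have hωneg : ωi < 0 := lt_of_le_of_lt h' hl
      have hui : 0 ≤ ui := by nlinarith
      nlinarith [sq_nonneg (ωi - ωinf)]

theorem stmt2 (n m : ℕ) (D : Fin m → Fin n → ℝ) (hD : ∀ j, ∑ i, D j i = 0)
    (b : Fin m → ℝ) (E M : Fin n → ℝ) (hE : ∀ i, 0 < E i) (hM : ∀ i, 0 ≤ M i)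
    (p : Fin n → ℝ) (ωinf : ℝ) (lamInf : Fin m → ℝ)
    (heq : ∀ i, 0 = -(E i * ωinf)
      - (∑ j, D j i * (b j * Real.sin (lamInf j))) + p i)
    (ωuthr ωlthr : Fin n → ℝ)
    (hthr : ∀ i, 0 < ωuthr i ∧ ωlthr i < 0 ∧ ωlthr i < ωinf ∧ ωinf < ωuthr i)
    (lam : ℝ → Fin m → ℝ) (ω u : ℝ → Fin n → ℝ) (ω' : ℝ → Fin n → ℝ)
    (hlam : ∀ t, HasDerivAt lam (fun j => ∑ i, D j i * ω t i) t)
    (hdyn : ∀ t, ∀ i, 0 < M i →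
      HasDerivAt (fun s => ω s i) (ω' t i) t ∧
      M i * ω' t i = -(E i * ω t i)
        - (∑ j, D j i * (b j * Real.sin (lam t j))) + p i + u t i)
    (halg : ∀ t, ∀ i, ¬ 0 < M i →
      0 = -(E i * ω t i)
        - (∑ j, D j i * (b j * Real.sin (lam t j))) + p i + u t i)
    (hsign1 : ∀ t, ∀ i, ¬ (ωlthr i < ω t i ∧ ω t i < ωuthr i) →
      ω t i * u t i ≤ 0)
    (hsign2 : ∀ t, ∀ i, (ωlthr i < ω t i ∧ ω t i < ωuthr i) → u t i = 0)
    (t : ℝ) :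
    deriv (fun s => Venergy M b ωinf lamInf (lam s) (ω s)) t ≤ 0 := by
  set L : Fin m → ℝ := fun j => ∑ i, D j i * ω t i with hL
  set c : Fin n → ℝ := fun i =>
    ∑ j, D j i * (b j * (Real.sin (lam t j) - Real.sin (lamInf j))) with hc
  have hlamj : ∀ j, HasDerivAt (fun s => lam s j) (L j) t :=
    fun j => hasDerivAt_pi.mp (hlam t) j
  -- derivative of V along the trajectory
  have hV : HasDerivAt (fun s => Venergy M b ωinf lamInf (lam s) (ω s))
      ((1/2) * ∑ i ∈ Finset.univ.filter (fun i => 0 < M i),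
          M i * ((2:ℝ) * (ω t i - ωinf) ^ 1 * ω' t i)
        + ∑ j, b j * (0 - (-Real.sin (lam t j) * L j)
            - L j * Real.sin (lamInf j))) t := by
    apply HasDerivAt.add
    · apply HasDerivAt.const_mul
      apply HasDerivAt.fun_sum
      intro i hi
      have hωi := (hdyn t i (Finset.mem_filter.mp hi).2).1
      exact ((hωi.sub_const ωinf).pow 2).const_mul (M i)
    · apply HasDerivAt.fun_sum
      intro j _
      exact (((hasDerivAt_const t (Real.cos (lamInf j))).sub
        (hlamj j).cos).sub
        (((hlamj j).sub_const (lamInf j)).mul_const (Real.sin (lamInf j)))).const_mul (b j)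
  rw [hV.deriv]
  -- algebraic identities
  have hc0 : ∑ i, c i = 0 := by
    simp only [hc]
    rw [Finset.sum_comm]
    refine Finset.sum_eq_zero fun j _ => ?_
    rw [← Finset.sum_mul, hD j, zero_mul]
  have hS : ∀ i, (∑ j, D j i * (b j * Real.sin (lam t j)))
      - (∑ j, D j i * (b j * Real.sin (lamInf j))) = c i := by
    intro i
    rw [hc, ← Finset.sum_sub_distrib]
    exact Finset.sum_congr rfl fun j _ => by ring
  have hGi : ∀ i, 0 < M i →
      M i * ω' t i = -(E i * (ω t i - ωinf)) - c i + u t i := by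
    intro i hi
    have h1 := (hdyn t i hi).2
    have h2 := heq i
    have h3 := hS i
    linarith
  have hnG : ∀ i, ¬ 0 < M i →
      c i = -(E i * (ω t i - ωinf)) + u t i := by
    intro i hi
    have h1 := halg t i hi
    have h2 := heq i
    have h3 := hS i
    linarith
  have hkin : (1/2) * ∑ i ∈ Finset.univ.filter (fun i => 0 < M i),
      M i * ((2:ℝ) * (ω t i - ωinf) ^ 1 * ω' t i)
      = ∑ i ∈ Finset.univ.filter (fun i => 0 < M i),
          (ω t i - ωinf) * (M i * ω' t i) := by
    rw [Finset.mul_sum]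
    exact Finset.sum_congr rfl fun i _ => by ring
  have hswap : ∑ j, b j * (0 - (-Real.sin (lam t j) * L j)
      - L j * Real.sin (lamInf j)) = ∑ i, ω t i * c i := by
    have e1 : ∀ j, b j * (0 - (-Real.sin (lam t j) * L j)
        - L j * Real.sin (lamInf j))
        = ∑ i, ω t i * (D j i * (b j * (Real.sin (lam t j) - Real.sin (lamInf j)))) := by
      intro j
      have : b j * (0 - (-Real.sin (lam t j) * L j) - L j * Real.sin (lamInf j))
          = (b j * (Real.sin (lam t j) - Real.sin (lamInf j))) * L j := by ring
      rw [this, hL, Finset.mul_sum]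
      exact Finset.sum_congr rfl fun i _ => by ring
    calc ∑ j, b j * (0 - (-Real.sin (lam t j) * L j) - L j * Real.sin (lamInf j))
        = ∑ j, ∑ i, ω t i * (D j i * (b j * (Real.sin (lam t j) - Real.sin (lamInf j)))) :=
          Finset.sum_congr rfl fun j _ => e1 j
      _ = ∑ i, ∑ j, ω t i * (D j i * (b j * (Real.sin (lam t j) - Real.sin (lamInf j)))) :=
          Finset.sum_comm
      _ = ∑ i, ω t i * c i := Finset.sum_congr rfl fun i _ => by
          rw [hc, Finset.mul_sum]
  have hωc : ∑ i, ω t i * c i = ∑ i, (ω t i - ωinf) * c i := by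
    have h : ∑ i, (ω t i - ωinf) * c i = ∑ i, ω t i * c i - ωinf * ∑ i, c i := by
      rw [Finset.mul_sum, ← Finset.sum_sub_distrib]
      exact Finset.sum_congr rfl fun i _ => by ring
    rw [h, hc0, mul_zero, sub_zero]
  rw [hkin, hswap, hωc,
    ← Finset.sum_filter_add_sum_filter_not Finset.univ (fun i => 0 < M i)
      (fun i => (ω t i - ωinf) * c i),
    ← add_assoc, ← Finset.sum_add_distrib]
  have hA : ∑ i ∈ Finset.univ.filter (fun i => 0 < M i),
      ((ω t i - ωinf) * (M i * ω' t i) + (ω t i - ωinf) * c i)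
      = ∑ i ∈ Finset.univ.filter (fun i => 0 < M i),
          (ω t i - ωinf) * (-(E i * (ω t i - ωinf)) + u t i) :=
    Finset.sum_congr rfl fun i hi => by
      rw [hGi i (Finset.mem_filter.mp hi).2]; ring
  have hB : ∑ i ∈ Finset.univ.filter (fun i => ¬ 0 < M i),
      (ω t i - ωinf) * c i
      = ∑ i ∈ Finset.univ.filter (fun i => ¬ 0 < M i),
          (ω t i - ωinf) * (-(E i * (ω t i - ωinf)) + u t i) :=
    Finset.sum_congr rfl fun i hi => by
      rw [hnG i (Finset.mem_filter.mp hi).2]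
  rw [hA, hB, Finset.sum_filter_add_sum_filter_not]
  refine Finset.sum_nonpos fun i _ => ?_
  obtain ⟨h1, h2, h3, h4⟩ := hthr i
  exact key_term (E i) (ω t i) ωinf (u t i) (ωuthr i) (ωlthr i)
    (hE i) h1 h2 h3 h4 (hsign1 t i) (hsign2 t i)
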